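/- Suppose sequences T_b and s_b (b ≥ 0) satisfy T_b = s_b + ∑_{i=0}^{b-1} r_{b-i}·s_i, where r_m = r_{m,κ} is the number of compositions of m with parts at most κ (and r_0 = 1). Then s_b = T_b - ∑_{i=max(0,b-κ)}^{b-1} T_i. -/

import Mathlib

/-- `boundedComp m κ` is the number of compositions of `m` with all parts at
most `κ` (with `boundedComp 0 κ = 1`). -/
def boundedComp (m κ : ℕ) : ℕ :=
  Fintype.card {c : Composition m // ∀ x ∈ c.blocks, x ≤ κ}

abbrev BL (κ m : ℕ) := {l : List ℕ // (∀ x ∈ l, 0 < x ∧ x ≤ κ) ∧ l.sum = m}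

def compEquivL (κ m : ℕ) : {c : Composition m // ∀ x ∈ c.blocks, x ≤ κ} ≃ BL κ m where
  toFun c := ⟨c.1.blocks, fun x hx => ⟨c.1.blocks_pos hx, c.2 x hx⟩, c.1.blocks_sum⟩
  invFun l := ⟨⟨l.1, fun hi => (l.2.1 _ hi).1, l.2.2⟩, fun x hx => (l.2.1 x hx).2⟩
  left_inv c := by ext1; rfl
  right_inv l := rfl

def consEquiv (κ m : ℕ) (hm : 1 ≤ m) :
    (Σ t : (Finset.Ico (m - κ) m), BL κ t) ≃ BL κ m where
  toFun p := ⟨(m - p.1.1) :: p.2.1, by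
      have ht := p.1.2
      rw [Finset.mem_Ico] at ht
      refine ⟨?_, ?_⟩
      · intro x hx
        rcases List.mem_cons.mp hx with h1 | h2
        · subst h1; omega
        · exact p.2.2.1 x h2
      · have := p.2.2.2
        simp only [List.sum_cons]
        omega⟩
  invFun l :=
    match l with
    | ⟨[], hl⟩ => absurd hl.2 (by simp; omega)
    | ⟨a :: l, hl⟩ =>
      ⟨⟨l.sum, by
          have ha := hl.1 a (List.mem_cons_self (a := a) (l := l))
          have := hl.2
          simp only [List.sum_cons] at this
          rw [Finset.mem_Ico]
          omega⟩,
        ⟨l, fun x hx => hl.1 x (List.mem_cons_of_mem a hx), rfl⟩⟩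
  left_inv := by
    rintro ⟨⟨t, ht⟩, ⟨l, hl⟩⟩
    have hsum : l.sum = t := hl.2
    subst hsum
    rfl
  right_inv := by
    rintro ⟨l, hl⟩
    rcases l with _ | ⟨a, l⟩
    · exact absurd hl.2 (by simp; omega)
    · have h2 := hl.2
      simp only [List.sum_cons] at h2
      have ha := hl.1 a (List.mem_cons_self (a := a) (l := l))
      apply Subtype.ext
      show (m - l.sum) :: l = a :: l
      congr 1
      omega

lemma boundedComp_zero (κ : ℕ) : boundedComp 0 κ = 1 := by
  have hb : ∀ c : Composition 0, c.blocks = [] := by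
    intro c
    have hs := c.blocks_sum
    rcases hc : c.blocks with _ | ⟨a, l⟩
    · rfl
    · exfalso
      have ha : 0 < a := c.blocks_pos (by rw [hc]; exact List.mem_cons_self (a := a) (l := l))
      rw [hc] at hs
      simp at hs
      omega
  apply Fintype.card_eq_one_iff.mpr
  refine ⟨⟨⟨[], by simp, rfl⟩, by simp⟩, ?_⟩
  rintro ⟨c, hc⟩
  apply Subtype.ext
  apply Composition.ext
  exact hb c

lemma boundedComp_rec (κ m : ℕ) (hm : 1 ≤ m) :
    boundedComp m κ = ∑ t ∈ Finset.Ico (m - κ) m, boundedComp t κ := by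
  have e : {c : Composition m // ∀ x ∈ c.blocks, x ≤ κ} ≃
      Σ t : (Finset.Ico (m - κ) m), {c : Composition t // ∀ x ∈ c.blocks, x ≤ κ} :=
    (compEquivL κ m).trans ((consEquiv κ m hm).symm.trans
      (Equiv.sigmaCongrRight fun t => (compEquivL κ t).symm))
  rw [boundedComp, Fintype.card_congr e, Fintype.card_sigma]
  rw [← Finset.sum_attach (Finset.Ico (m - κ) m) (fun t => boundedComp t κ)]
  rfl

lemma coeff_sum (κ b j : ℕ) (hj : j < b) :
    ∑ i ∈ Finset.Ico (max j (b - κ)) b, boundedComp (i - j) κ = boundedComp (b - j) κ := by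
  rw [boundedComp_rec κ (b - j) (by omega)]
  apply Finset.sum_nbij' (fun i => i - j) (fun t => t + j)
  · intro i hi; rw [Finset.mem_Ico] at *; omega
  · intro t ht; rw [Finset.mem_Ico] at *; omega
  · intro i hi; rw [Finset.mem_Ico] at hi; omega
  · intro t ht; omega
  · intro i hi; rfl

theorem capacity_inversion (κ : ℕ) (hκ : 1 ≤ κ) (T s : ℕ → ℤ)
    (h : ∀ b, T b = s b + ∑ i ∈ Finset.range b, (boundedComp (b - i) κ : ℤ) * s i) :
    ∀ b, s b = T b - ∑ i ∈ Finset.Ico (b - κ) b, T i := by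
  intro b
  have key : ∑ i ∈ Finset.Ico (b - κ) b, T i
      = ∑ i ∈ Finset.range b, (boundedComp (b - i) κ : ℤ) * s i := by
    have step1 : ∀ i, T i = ∑ j ∈ Finset.range (i + 1), (boundedComp (i - j) κ : ℤ) * s j := by
      intro i
      rw [Finset.sum_range_succ, h i]
      simp [boundedComp_zero]
      ring
    calc ∑ i ∈ Finset.Ico (b - κ) b, T i
        = ∑ i ∈ Finset.Ico (b - κ) b, ∑ j ∈ Finset.range (i + 1),
            (boundedComp (i - j) κ : ℤ) * s j := by
          exact Finset.sum_congr rfl fun i _ => step1 i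
      _ = ∑ j ∈ Finset.range b, ∑ i ∈ Finset.Ico (max j (b - κ)) b,
            (boundedComp (i - j) κ : ℤ) * s j := by
          apply Finset.sum_comm'
          intro i j
          simp only [Finset.mem_Ico, Finset.mem_range]
          omega
      _ = ∑ j ∈ Finset.range b, (boundedComp (b - j) κ : ℤ) * s j := by
          apply Finset.sum_congr rfl
          intro j hj
          rw [Finset.mem_range] at hj
          rw [← Finset.sum_mul, ← Nat.cast_sum, coeff_sum κ b j hj]
  rw [h b, key]
  ring
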